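/- Let $n \ge 1$, $0 < \mu \le 1/2$, $c > 0$, $s \ge 1$, $R \ge 0$, and let $G$ be a symmetric $n \times n$ matrix satisfying $G_{\varphi\varphi} \ge \mu - R$ for all $\varphi$, $G_{\varphi\varphi'} \ge \mu^2 - R$ and $G_{\varphi\varphi'} \le (1-\mu)^2 + R$ for all $\varphi \ne \varphi'$. Assume $\mu^2 \geq R$. Then for every index set $J$ with $|J| \le s$ and every $a \in \mathbb{R}^n$ with $|a_{J^c}|_1 \le c|a_J|_1$, one has $a^\top G a \ge \left[(\mu - \mu^2) - ((1 - 2\mu) + R)(1+c)^2 s\right] \|a_J\|^2$. -/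

import Mathlib

set_option maxHeartbeats 1000000


open Matrix

/-- Deterministic heart of the restricted eigenvalue property for the Hawkes dictionary. -/
theorem stmt15 {n : ℕ} (hn : 1 ≤ n) (μ c R : ℝ) (s : ℕ)
    (hμ0 : 0 < μ) (hμ : μ ≤ 1 / 2) (hc : 0 < c) (hs : 1 ≤ s)
    (hR : 0 ≤ R) (hμR : R ≤ μ ^ 2)
    (G : Matrix (Fin n) (Fin n) ℝ) (hGsym : G.IsSymm)
    (hdiag : ∀ i, μ - R ≤ G i i)
    (hlow : ∀ i j, i ≠ j → μ ^ 2 - R ≤ G i j)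
    (hhigh : ∀ i j, i ≠ j → G i j ≤ (1 - μ) ^ 2 + R) :
    ∀ J : Finset (Fin n), J.card ≤ s → ∀ a : Fin n → ℝ,
      (∑ i ∈ Jᶜ, |a i|) ≤ c * ∑ i ∈ J, |a i| →
      ((μ - μ ^ 2) - ((1 - 2 * μ) + R) * (1 + c) ^ 2 * s) * ∑ i ∈ J, (a i) ^ 2
        ≤ a ⬝ᵥ (G *ᵥ a) := by
  intro J hJ a ha
  set K : ℝ := (1 - 2 * μ) + R with hKdef
  have hK0 : (0:ℝ) ≤ K := by rw [hKdef]; nlinarith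
  set NJ : ℝ := ∑ i ∈ J, (a i)^2 with hNJdef
  set LJ : ℝ := ∑ i ∈ J, |a i| with hLJdef
  set L : ℝ := ∑ i, |a i| with hLdef
  set S : ℝ := ∑ i, a i with hSdef
  set N : ℝ := ∑ i, (a i)^2 with hNdef
  have hNJ0 : 0 ≤ NJ := Finset.sum_nonneg fun i _ => sq_nonneg _
  have hLJ0 : 0 ≤ LJ := Finset.sum_nonneg fun i _ => abs_nonneg _
  have hNNJ : NJ ≤ N := by
    apply Finset.sum_le_sum_of_subset_of_nonneg (Finset.subset_univ J)
    intro i _ _; exact sq_nonneg _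
  -- ℓ¹ cone condition
  have hLsplit : LJ + (∑ i ∈ Jᶜ, |a i|) = L := Finset.sum_add_sum_compl J _
  have hL : L ≤ (1 + c) * LJ := by
    rw [← hLsplit]; nlinarith
  have hL0 : 0 ≤ L := Finset.sum_nonneg fun i _ => abs_nonneg _
  -- Cauchy–Schwarz on J
  have hCS : LJ ^ 2 ≤ (J.card : ℝ) * NJ := by
    have := sq_sum_le_card_mul_sum_sq (s := J) (f := fun i => |a i|)
    simpa [sq_abs] using this
  have hcard : (J.card : ℝ) ≤ (s : ℝ) := by exact_mod_cast hJ
  have hL2 : L ^ 2 ≤ (1 + c) ^ 2 * ((s : ℝ) * NJ) := by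
    have h1 : L ^ 2 ≤ ((1 + c) * LJ) ^ 2 := by nlinarith
    have h2 : (J.card : ℝ) * NJ ≤ (s : ℝ) * NJ := by nlinarith
    nlinarith [sq_nonneg (1 + c)]
  -- termwise lower bound
  have key : ∀ i j, μ^2 * (a i * a j) - K * (|a i| * |a j|)
      + (if i = j then (1 - μ - μ^2) * (a i)^2 else 0) ≤ a i * (G i j * a j) := by
    intro i j
    by_cases h : i = j
    · subst h
      rw [if_pos rfl]
      have h1 := hdiag i
      have habs : |a i| * |a i| = a i * a i := abs_mul_abs_self (a i)
      nlinarith [sq_nonneg (a i)]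
    · simp only [if_neg h, add_zero]
      have h1 := hlow i j h
      have h2 := hhigh i j h
      have hb : |G i j - μ ^ 2| ≤ K := by
        rw [abs_le]; constructor <;> nlinarith
      have habs : |a i * a j| = |a i| * |a j| := abs_mul _ _
      have h3 : -(|a i * a j| * K) ≤ (a i * a j) * (G i j - μ ^ 2) := by
        calc -(|a i * a j| * K) ≤ -( |a i * a j| * |G i j - μ ^ 2|) := by
              nlinarith [abs_nonneg (a i * a j)]
          _ = -( |(a i * a j) * (G i j - μ ^ 2)|) := by
              rw [abs_mul (a i * a j) (G i j - μ ^ 2), habs]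
          _ ≤ (a i * a j) * (G i j - μ ^ 2) := neg_abs_le _
      nlinarith
  -- sum the termwise bound
  have hQ : ∑ i, ∑ j, (μ^2 * (a i * a j) - K * (|a i| * |a j|)
      + (if i = j then (1 - μ - μ^2) * (a i)^2 else 0)) ≤ a ⬝ᵥ (G *ᵥ a) := by
    simp only [dotProduct, mulVec, Finset.mul_sum]
    exact Finset.sum_le_sum fun i _ => Finset.sum_le_sum fun j _ => key i j
  have hsum : ∑ i, ∑ j, (μ^2 * (a i * a j) - K * (|a i| * |a j|)
      + (if i = j then (1 - μ - μ^2) * (a i)^2 else 0))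
      = μ^2 * S^2 - K * L^2 + (1 - μ - μ^2) * N := by
    have e1 : ∀ i : Fin n, ∑ j, (μ^2 * (a i * a j) - K * (|a i| * |a j|)
        + (if i = j then (1 - μ - μ^2) * (a i)^2 else 0))
        = μ^2 * (a i * S) - K * (|a i| * L) + (1 - μ - μ^2) * (a i)^2 := by
      intro i
      rw [Finset.sum_add_distrib, Finset.sum_sub_distrib]
      congr 1
      · rw [← Finset.mul_sum, ← Finset.mul_sum, ← Finset.mul_sum, ← Finset.mul_sum]
      · simp
    rw [Finset.sum_congr rfl (fun i _ => e1 i), Finset.sum_add_distrib,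
      Finset.sum_sub_distrib, ← Finset.mul_sum, ← Finset.mul_sum, ← Finset.mul_sum,
      ← Finset.sum_mul, ← Finset.sum_mul, ← hSdef, ← hLdef, ← hNdef]
    ring
  rw [hsum] at hQ
  -- final arithmetic
  have hS2 : 0 ≤ S ^ 2 := sq_nonneg _
  have hμ1 : 0 ≤ 1 - 2 * μ := by linarith
  nlinarith [mul_nonneg hK0 (sub_nonneg.2 hL2), mul_nonneg hμ1 (le_trans hNJ0 hNNJ),
    mul_nonneg (mul_nonneg hμ0.le (by linarith : (0:ℝ) ≤ 1 - μ)) (sub_nonneg.2 hNNJ)]
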